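/- Let A, B, C, D, E, F, G, H₀ be complex constants and let f = Σ_{n≥0} a_n xⁿ be a formal power series over ℂ satisfying the fourth-order linear differential equation x²(x−1)²·f⁗ + (Ax−B)·x(x−1)·f‴ + (Cx²−Dx+E)·f″ + (Fx−G)·f′ + H₀·f = 0 (with formal derivatives of power series). Then for every integer n ≥ 0 the coefficients satisfy the three-term recursion: (n+1)(n+2)·[n(n−1) + Bn + E]·a_{n+2} = (n+1)·[2n(n−1)(n−2) + (A+B)n(n−1) + Dn + G]·a_{n+1} − [n(n−1)(n−2)(n−3) + An(n−1)(n−2) + Cn(n−1) + Fn + H₀]·a_n. -/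

import Mathlib

open PowerSeries

/-- The coefficients of a formal power series solution of the Goursat type II
differential equation `x²(x−1)²f⁗ + (Ax−B)x(x−1)f‴ + (Cx²−Dx+E)f″ + (Fx−G)f′
+ H₀f = 0` satisfy the three-term recursion. -/
theorem stmt_16 (A B C D E F G H₀ : ℂ) (f : PowerSeries ℂ)
    (hode :
      (PowerSeries.X * (PowerSeries.X - 1)) ^ 2 *
          (PowerSeries.derivative ℂ (PowerSeries.derivative ℂ
            (PowerSeries.derivative ℂ (PowerSeries.derivative ℂ f)))) +
        (PowerSeries.C A * PowerSeries.X - PowerSeries.C B) *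
          (PowerSeries.X * (PowerSeries.X - 1)) *
          (PowerSeries.derivative ℂ (PowerSeries.derivative ℂ
            (PowerSeries.derivative ℂ f))) +
        (PowerSeries.C C * PowerSeries.X ^ 2 - PowerSeries.C D * PowerSeries.X +
            PowerSeries.C E) *
          (PowerSeries.derivative ℂ (PowerSeries.derivative ℂ f)) +
        (PowerSeries.C F * PowerSeries.X - PowerSeries.C G) *
          (PowerSeries.derivative ℂ f) +
        PowerSeries.C H₀ * f = 0) :
    ∀ n : ℕ,
      ((n : ℂ) + 1) * ((n : ℂ) + 2) *
          ((n : ℂ) * ((n : ℂ) - 1) + B * (n : ℂ) + E) *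
          PowerSeries.coeff (n + 2) f =
        ((n : ℂ) + 1) *
            (2 * (n : ℂ) * ((n : ℂ) - 1) * ((n : ℂ) - 2) +
              (A + B) * (n : ℂ) * ((n : ℂ) - 1) + D * (n : ℂ) + G) *
            PowerSeries.coeff (n + 1) f -
          ((n : ℂ) * ((n : ℂ) - 1) * ((n : ℂ) - 2) * ((n : ℂ) - 3) +
              A * (n : ℂ) * ((n : ℂ) - 1) * ((n : ℂ) - 2) +
              C * (n : ℂ) * ((n : ℂ) - 1) + F * (n : ℂ) + H₀) *
            PowerSeries.coeff n f := by
  intro n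
  set f1 := PowerSeries.derivative ℂ f with hf1
  set f2 := PowerSeries.derivative ℂ f1 with hf2
  set f3 := PowerSeries.derivative ℂ f2 with hf3
  set f4 := PowerSeries.derivative ℂ f3 with hf4
  have h2 : X^4 * f4 - (X^3 * f4) - (X^3 * f4) + X^2 * f4
      + PowerSeries.C A * (X^3 * f3) - PowerSeries.C A * (X^2 * f3)
      - PowerSeries.C B * (X^2 * f3) + PowerSeries.C B * (X^1 * f3)
      + PowerSeries.C C * (X^2 * f2) - PowerSeries.C D * (X^1 * f2)
      + PowerSeries.C E * f2
      + PowerSeries.C F * (X^1 * f1) - PowerSeries.C G * f1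
      + PowerSeries.C H₀ * f = 0 := by
    linear_combination hode
  have hc : ∀ m : ℕ, coeff m (X^4 * f4 - (X^3 * f4) - (X^3 * f4) + X^2 * f4
      + PowerSeries.C A * (X^3 * f3) - PowerSeries.C A * (X^2 * f3)
      - PowerSeries.C B * (X^2 * f3) + PowerSeries.C B * (X^1 * f3)
      + PowerSeries.C C * (X^2 * f2) - PowerSeries.C D * (X^1 * f2)
      + PowerSeries.C E * f2
      + PowerSeries.C F * (X^1 * f1) - PowerSeries.C G * f1
      + PowerSeries.C H₀ * f) = 0 := by
    intro m; rw [h2]; simp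
  have hd : ∀ m : ℕ, coeff m f1 = coeff (m+1) f * (m+1) := fun m =>
    PowerSeries.coeff_derivative f m
  have hd2 : ∀ m : ℕ, coeff m f2 = coeff (m+1) f1 * (m+1) := fun m =>
    PowerSeries.coeff_derivative f1 m
  have hd3 : ∀ m : ℕ, coeff m f3 = coeff (m+1) f2 * (m+1) := fun m =>
    PowerSeries.coeff_derivative f2 m
  have hd4 : ∀ m : ℕ, coeff m f4 = coeff (m+1) f3 * (m+1) := fun m =>
    PowerSeries.coeff_derivative f3 m
  match n with
  | 0 =>
    have h := hc 0
    simp only [map_add, map_sub, map_mul, coeff_C_mul, coeff_X_pow_mul', hd, hd2, hd3, hd4, ← coeff_zero_eq_constantCoeff] at h ⊢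
    push_cast at h ⊢
    linear_combination h
  | 1 =>
    have h := hc 1
    simp only [map_add, map_sub, map_mul, coeff_C_mul, coeff_X_pow_mul', hd, hd2, hd3, hd4, ← coeff_zero_eq_constantCoeff] at h ⊢
    push_cast at h ⊢
    linear_combination h
  | 2 =>
    have h := hc 2
    simp only [map_add, map_sub, map_mul, coeff_C_mul, coeff_X_pow_mul', hd, hd2, hd3, hd4, ← coeff_zero_eq_constantCoeff] at h ⊢
    push_cast at h ⊢
    linear_combination h
  | 3 =>
    have h := hc 3
    simp only [map_add, map_sub, map_mul, coeff_C_mul, coeff_X_pow_mul', hd, hd2, hd3, hd4, ← coeff_zero_eq_constantCoeff] at h ⊢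
    push_cast at h ⊢
    linear_combination h
  | (k+4) =>
    have h := hc (k+4)
    have e4 : k + 4 - 4 = k := by omega
    have e3 : k + 4 - 3 = k + 1 := by omega
    have e2 : k + 4 - 2 = k + 2 := by omega
    have e1 : k + 4 - 1 = k + 3 := by omega
    simp [coeff_X_pow_mul', e4, e3, e2, e1, hd, hd2, hd3, hd4] at h ⊢
    push_cast at h ⊢
    linear_combination h
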